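/- If m^{1+κ} · ∏_{j=1}^{d-1} ⟨θ_j m⟩ ≥ c(κ) holds for all positive integers m, then the quantity ν(L)^d := μ(L) · ∏_{j=1}^{d-1} 2^{−l_j−1} satisfies ν(L)^d > c₂(κ) · 2^{−κ|L|₁/(κ+1)}, where c₂(κ) = (c(κ)·2^{−(d−1)κ})^{1/(1+κ)}. -/

import Mathlib

open scoped BigOperators

/-- Distance from a real number to the nearest integer. -/
noncomputable def distInt (x : ℝ) : ℝ := |x - round x|

lemma distInt_le_abs_sub_int (x : ℝ) (k : ℤ) : distInt x ≤ |x - k| := by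
  rcases le_or_gt (1/2 : ℝ) |x - k| with h | h
  · exact le_trans (abs_sub_round x) h
  · have hk : round x = k := by
      rw [round_eq, Int.floor_eq_iff]
      rw [abs_lt] at h
      constructor
      · linarith [h.1]
      · push_cast; linarith [h.2]
    rw [distInt, hk]

lemma distInt_neg_le (x : ℝ) : distInt (-x) ≤ distInt x := by
  have h := distInt_le_abs_sub_int (-x) (-round x)
  calc distInt (-x) ≤ |(-x) - ((-round x : ℤ) : ℝ)| := h
    _ = distInt x := by
        rw [distInt]; push_cast
        rw [show -x - -(round x : ℝ) = -(x - round x) by ring, abs_neg]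

lemma exists_good_md (n : ℕ) (θ : Fin n → ℝ) (K : Fin n → ℕ) (hK : ∀ j, 0 < K j) :
    ∃ md : ℤ, md ≠ 0 ∧ ∀ j, distInt (θ j * md) ≤ ((K j : ℝ))⁻¹ := by
  have hfr : ∀ (m : ℕ) (j : Fin n), (⌊Int.fract (θ j * m) * K j⌋).toNat < K j := by
    intro m j
    have h1 : Int.fract (θ j * m) < 1 := Int.fract_lt_one _
    have h0 : (0:ℝ) ≤ Int.fract (θ j * m) := Int.fract_nonneg _
    have hKj : (0:ℝ) < K j := by exact_mod_cast hK j
    have hlt : ⌊Int.fract (θ j * m) * K j⌋ < (K j : ℤ) := by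
      apply Int.floor_lt.mpr
      push_cast
      nlinarith
    have := hK j
    omega
  set B := ∏ j, K j with hB
  obtain ⟨a, b, hab, hfab⟩ := Fintype.exists_ne_map_eq_of_card_lt
    (fun m : Fin (B + 1) => fun j => (⟨(⌊Int.fract (θ j * (m : ℕ)) * K j⌋).toNat, hfr m j⟩ : Fin (K j)))
    (by simp [Fintype.card_pi, hB])
  -- wlog a < b
  wlog hlt' : (a : ℕ) < (b : ℕ) generalizing a b
  · have hne : (a : ℕ) ≠ (b : ℕ) := fun h => hab (Fin.ext h)
    exact this b a hab.symm hfab.symm (by omega)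
  refine ⟨(b : ℕ) - (a : ℕ), by omega, ?_⟩
  intro j
  have hfloor : ⌊Int.fract (θ j * (a : ℕ)) * K j⌋ = ⌊Int.fract (θ j * (b : ℕ)) * K j⌋ := by
    have := congrFun hfab j
    have h1 := Int.floor_nonneg.mpr (mul_nonneg (Int.fract_nonneg (θ j * (a:ℕ))) (by positivity) : (0:ℝ) ≤ Int.fract (θ j * (a:ℕ)) * K j)
    have h2 := Int.floor_nonneg.mpr (mul_nonneg (Int.fract_nonneg (θ j * (b:ℕ))) (by positivity) : (0:ℝ) ≤ Int.fract (θ j * (b:ℕ)) * K j)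
    have h3 : (⌊Int.fract (θ j * (a : ℕ)) * K j⌋).toNat = (⌊Int.fract (θ j * (b : ℕ)) * K j⌋).toNat := by
      simpa using congrArg Fin.val this
    omega
  set u := Int.fract (θ j * (a : ℕ)) with hu
  set v := Int.fract (θ j * (b : ℕ)) with hv
  have hKj : (0:ℝ) < K j := by exact_mod_cast hK j
  have habs : |v - u| * K j < 1 := by
    have l1 : (⌊u * K j⌋ : ℝ) ≤ u * K j := Int.floor_le _
    have l2 : u * K j < ⌊u * K j⌋ + 1 := Int.lt_floor_add_one _
    have l3 : (⌊v * K j⌋ : ℝ) ≤ v * K j := Int.floor_le _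
    have l4 : v * K j < ⌊v * K j⌋ + 1 := Int.lt_floor_add_one _
    rw [hfloor] at l1 l2
    calc |v - u| * K j = |v * K j - u * K j| := by
          rw [← sub_mul, abs_mul, abs_of_nonneg hKj.le]
      _ < 1 := by rw [abs_sub_lt_iff]; constructor <;> linarith
  push_cast
  have key : distInt (θ j * (((b : ℕ) : ℝ) - ((a : ℕ) : ℝ))) ≤ |v - u| := by
    calc distInt (θ j * (((b : ℕ) : ℝ) - ((a : ℕ) : ℝ)))
        ≤ |θ j * (((b : ℕ) : ℝ) - ((a : ℕ) : ℝ)) - ((⌊θ j * (b : ℕ)⌋ - ⌊θ j * (a : ℕ)⌋ : ℤ) : ℝ)| :=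
          distInt_le_abs_sub_int _ _
      _ = |v - u| := by
          rw [hu, hv, Int.fract, Int.fract]
          push_cast
          ring_nf
  calc distInt (θ j * (((b : ℕ) : ℝ) - ((a : ℕ) : ℝ))) ≤ |v - u| := key
    _ ≤ ((K j : ℝ))⁻¹ := by
        rw [inv_eq_one_div, le_div_iff₀ hKj]
        exact habs.le

lemma two_rpow_nat_inv (l : ℕ) : (2:ℝ) ^ (-(l:ℝ) - 1) = (((2^(l+1) : ℕ)):ℝ)⁻¹ := by
  rw [show -(l:ℝ) - 1 = -(((l+1 : ℕ)):ℝ) by push_cast; ring,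
    Real.rpow_neg (by norm_num), Real.rpow_natCast]
  push_cast
  ring

/-- The dyadic minimum `μ(L)` of the lattice `Λ_θ`. -/
noncomputable def dyadicMin (n : ℕ) (θ : Fin n → ℝ) (L : Fin n → ℕ) : ℝ :=
  sInf {t : ℝ | ∃ md : ℤ, md ≠ 0 ∧
    (∀ j, distInt (θ j * md) ≤ (2 : ℝ) ^ (-(L j : ℝ) - 1)) ∧ t = |(md : ℝ)|}

theorem hyperbolic_norm_lower_bound (n : ℕ) (hn : 1 ≤ n) (θ : Fin n → ℝ)
    (hθ : ∀ j, Irrational (θ j)) (κ c : ℝ) (hκ : 0 < κ) (hc : 0 < c)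
    (happrox : ∀ m : ℕ, 0 < m → c ≤ (m : ℝ) ^ (1 + κ) * ∏ j, distInt (θ j * m)) :
    ∀ L : Fin n → ℕ,
      (c * 2 ^ (-(n : ℝ) * κ)) ^ (1 / (1 + κ)) * 2 ^ (-κ * (∑ j, (L j : ℝ)) / (κ + 1))
        < dyadicMin n θ L * ∏ j, (2 : ℝ) ^ (-(L j : ℝ) - 1) := by
  intro L
  have hNE : Nonempty (Fin n) := ⟨⟨0, hn⟩⟩
  have h2 : (0:ℝ) < 2 := two_pos
  have hp : (0:ℝ) < 1 + κ := by linarith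
  set q : ℝ := 1 / (1 + κ) with hq
  set SL : ℝ := ∑ j, (L j : ℝ) with hSL
  have hProd : ∏ j, (2:ℝ) ^ (-(L j : ℝ) - 1) = 2 ^ (-SL - (n:ℝ)) := by
    rw [← Real.rpow_sum_of_pos h2]
    congr 1
    rw [hSL, Finset.sum_sub_distrib]
    simp [Finset.sum_neg_distrib, Finset.card_univ]
  have hPpos : (0:ℝ) < ∏ j, (2:ℝ) ^ (-(L j : ℝ) - 1) :=
    Finset.prod_pos fun j _ => Real.rpow_pos_of_pos h2 _
  set b : ℝ := (c * 2 ^ (SL + (n:ℝ))) ^ q with hb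
  have hXpos : (0:ℝ) < c * 2 ^ (SL + (n:ℝ)) :=
    mul_pos hc (Real.rpow_pos_of_pos h2 _)
  -- the set is nonempty
  set S := {t : ℝ | ∃ md : ℤ, md ≠ 0 ∧
    (∀ j, distInt (θ j * md) ≤ (2 : ℝ) ^ (-(L j : ℝ) - 1)) ∧ t = |(md : ℝ)|} with hS
  have hSne : S.Nonempty := by
    obtain ⟨md, h0, hj⟩ := exists_good_md n θ (fun j => 2 ^ (L j + 1))
      (fun j => pow_pos two_pos _)
    exact ⟨|(md : ℝ)|, md, h0, fun j => by rw [two_rpow_nat_inv]; exact hj j, rfl⟩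
  -- every element of S is at least ⌊b⌋ + 1
  have hkey : ∀ t ∈ S, ((⌊b⌋ : ℝ) + 1) ≤ t := by
    rintro t ⟨md, hmd0, hmdj, rfl⟩
    set m : ℕ := md.natAbs with hm
    have hmpos : 0 < m := Int.natAbs_pos.mpr hmd0
    have hcast : ((m : ℕ) : ℝ) = |(md : ℝ)| := by
      rw [hm, Nat.cast_natAbs]; push_cast; ring
    -- distInt bounds for the natural number m
    have hdm : ∀ j, distInt (θ j * m) < (2:ℝ) ^ (-(L j : ℝ) - 1) := by
      intro j
      have hle : distInt (θ j * m) ≤ (2:ℝ) ^ (-(L j : ℝ) - 1) := by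
        rcases abs_cases ((md : ℝ)) with ⟨he, _⟩ | ⟨he, _⟩
        · rw [hcast, he]; exact hmdj j
        · rw [hcast, he, show θ j * -(md:ℝ) = -(θ j * md) by ring]
          exact le_trans (distInt_neg_le _) (hmdj j)
      have hirr : Irrational (θ j * m) := (hθ j).mul_natCast hmpos.ne'
      have hyirr : Irrational (θ j * m - round (θ j * m)) := hirr.sub_intCast _
      rcases lt_or_eq_of_le hle with h | h
      · exact h
      · exfalso
        simp only [distInt] at h
        rcases (abs_eq (Real.rpow_nonneg h2.le _)).mp h with he | he
        · have : Irrational ((2:ℝ) ^ (-(L j : ℝ) - 1)) := he ▸ hyirr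
          rw [two_rpow_nat_inv] at this
          exact this ⟨((2^(L j + 1) : ℕ) : ℚ)⁻¹, by push_cast; ring⟩
        · have : Irrational (-((2:ℝ) ^ (-(L j : ℝ) - 1))) := he ▸ hyirr
          rw [two_rpow_nat_inv] at this
          exact this ⟨-((2^(L j + 1) : ℕ) : ℚ)⁻¹, by push_cast; ring⟩
    have hdpos : ∀ j, 0 < distInt (θ j * m) := by
      intro j
      have hirr : Irrational (θ j * m) := (hθ j).mul_natCast hmpos.ne'
      have hyirr : Irrational (θ j * m - round (θ j * m)) := hirr.sub_intCast _
      exact abs_pos.mpr hyirr.ne_zero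
    have hprodlt : ∏ j, distInt (θ j * m) < ∏ j, (2:ℝ) ^ (-(L j : ℝ) - 1) :=
      Finset.prod_lt_prod_of_nonempty (fun j _ => hdpos j) (fun j _ => hdm j)
        Finset.univ_nonempty
    have hmp : (0:ℝ) < (m : ℝ) ^ (1 + κ) :=
      Real.rpow_pos_of_pos (by exact_mod_cast hmpos) _
    have h5 : c < (m : ℝ) ^ (1 + κ) * 2 ^ (-SL - (n:ℝ)) := by
      calc c ≤ (m : ℝ) ^ (1 + κ) * ∏ j, distInt (θ j * m) := happrox m hmpos
        _ < (m : ℝ) ^ (1 + κ) * ∏ j, (2:ℝ) ^ (-(L j : ℝ) - 1) :=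
            mul_lt_mul_of_pos_left hprodlt hmp
        _ = (m : ℝ) ^ (1 + κ) * 2 ^ (-SL - (n:ℝ)) := by rw [hProd]
    have h6 : c * 2 ^ (SL + (n:ℝ)) < (m : ℝ) ^ (1 + κ) := by
      have := mul_lt_mul_of_pos_right h5 (Real.rpow_pos_of_pos h2 (SL + (n:ℝ)))
      rwa [mul_assoc, ← Real.rpow_add h2,
        show -SL - (n:ℝ) + (SL + (n:ℝ)) = 0 by ring, Real.rpow_zero, mul_one] at this
    have hbm : b < (m : ℝ) := by
      by_contra hcon
      push_neg at hcon
      have h7 : ((m:ℝ)) ^ (1 + κ) ≤ b ^ (1 + κ) :=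
        Real.rpow_le_rpow (Nat.cast_nonneg m) hcon hp.le
      have h8 : b ^ (1 + κ) = c * 2 ^ (SL + (n:ℝ)) := by
        rw [hb, ← Real.rpow_mul hXpos.le, hq, one_div_mul_cancel hp.ne', Real.rpow_one]
      linarith
    have : (⌊b⌋ : ℤ) + 1 ≤ (m : ℤ) := by
      have := Int.floor_lt.mpr hbm
      omega
    calc ((⌊b⌋ : ℝ) + 1) ≤ ((m : ℕ) : ℝ) := by exact_mod_cast this
      _ = |(md : ℝ)| := hcast
  have hlow : ((⌊b⌋ : ℝ) + 1) ≤ dyadicMin n θ L := le_csInf hSne hkey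
  have hEq : (c * 2 ^ (-(n : ℝ) * κ)) ^ (1 / (1 + κ)) * 2 ^ (-κ * SL / (κ + 1))
      = b * 2 ^ (-SL - (n:ℝ)) := by
    have h1κ : (1 + κ) ≠ 0 := hp.ne'
    have hκ1 : (κ + 1) ≠ 0 := by linarith
    rw [hb, hq, Real.mul_rpow hc.le (Real.rpow_nonneg h2.le _),
      Real.mul_rpow hc.le (Real.rpow_nonneg h2.le _),
      ← Real.rpow_mul h2.le, ← Real.rpow_mul h2.le,
      mul_assoc, mul_assoc, ← Real.rpow_add h2]
    rw [mul_assoc, ← Real.rpow_add h2]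
    congr 1
    congr 1
    field_simp
    ring
  calc (c * 2 ^ (-(n : ℝ) * κ)) ^ (1 / (1 + κ)) * 2 ^ (-κ * SL / (κ + 1))
      = b * 2 ^ (-SL - (n:ℝ)) := hEq
    _ = b * ∏ j, (2:ℝ) ^ (-(L j : ℝ) - 1) := by rw [hProd]
    _ < ((⌊b⌋ : ℝ) + 1) * ∏ j, (2:ℝ) ^ (-(L j : ℝ) - 1) :=
        mul_lt_mul_of_pos_right (Int.lt_floor_add_one b) hPpos
    _ ≤ dyadicMin n θ L * ∏ j, (2:ℝ) ^ (-(L j : ℝ) - 1) :=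
        mul_le_mul_of_nonneg_right hlow hPpos.le
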